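/- Let n ≥ 2 and define φ : (0,∞)^{n-1} → ℝ by φ(y) = Σ_{S ⊆ [n-1]} (1/(|S|+1)) · Π_{j ∈ S} (e^{y_j} - 1), where the sum is over all subsets S of {1,...,n-1}. Then φ is Schur-convex, i.e., for all y in the domain, (y₁ - y₂)·(∂φ/∂y₁(y) - ∂φ/∂y₂(y)) ≥ 0. -/

import Mathlib

open Finset Real

noncomputable section SchurAux

variable {m : ℕ}

/-- The explicit derivative of φ. -/
noncomputable def Lmap (y : Fin m → ℝ) : (Fin m → ℝ) →L[ℝ] ℝ :=
  ∑ S ∈ (Finset.univ : Finset (Fin m)).powerset,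
    (1 / (S.card + 1) : ℝ) •
      ∑ j ∈ S, (∏ k ∈ S.erase j, (Real.exp (y k) - 1)) •
        (Real.exp (y j) • (ContinuousLinearMap.proj j : (Fin m → ℝ) →L[ℝ] ℝ))

lemma hasFDeriv_phi (y : Fin m → ℝ) :
    HasFDerivAt (fun y : Fin m → ℝ => ∑ S ∈ (Finset.univ : Finset (Fin m)).powerset,
      (1 / (S.card + 1) : ℝ) * ∏ j ∈ S, (Real.exp (y j) - 1)) (Lmap y) y := by
  apply HasFDerivAt.fun_sum
  intro S _
  have h : ∀ j ∈ S, HasFDerivAt (fun y : Fin m → ℝ => Real.exp (y j) - 1)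
      (Real.exp (y j) • (ContinuousLinearMap.proj j : (Fin m → ℝ) →L[ℝ] ℝ)) y := by
    intro j _
    exact ((ContinuousLinearMap.proj j : (Fin m → ℝ) →L[ℝ] ℝ).hasFDerivAt (x := y)).exp.sub_const 1
  exact (HasFDerivAt.finset_prod h).const_mul _

lemma Lmap_single (y : Fin m → ℝ) (i : Fin m) :
    Lmap y (Pi.single i 1) =
      Real.exp (y i) * ∑ T ∈ ((Finset.univ : Finset (Fin m)).erase i).powerset,
        (1 / (T.card + 2) : ℝ) * ∏ j ∈ T, (Real.exp (y j) - 1) := by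
  have h1 : Lmap y (Pi.single i 1) =
      ∑ S ∈ (Finset.univ : Finset (Fin m)).powerset,
        (if i ∈ S then (1 / (S.card + 1) : ℝ) * (Real.exp (y i) *
          ∏ k ∈ S.erase i, (Real.exp (y k) - 1)) else 0) := by
    simp only [Lmap, ContinuousLinearMap.sum_apply, ContinuousLinearMap.smul_apply,
      ContinuousLinearMap.proj_apply, Pi.single_apply, smul_eq_mul]
    refine Finset.sum_congr rfl fun S _ => ?_
    rw [Finset.mul_sum]
    have : ∀ j ∈ S, (1 / ((S.card : ℝ) + 1)) * ((∏ k ∈ S.erase j, (Real.exp (y k) - 1)) *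
        (Real.exp (y j) * if j = i then 1 else 0)) =
        if j = i then (1 / ((S.card : ℝ) + 1)) * (Real.exp (y i) *
          ∏ k ∈ S.erase i, (Real.exp (y k) - 1)) else 0 := by
      intro j _
      by_cases h : j = i
      · subst h; simp only [if_true, eq_self_iff_true, mul_one]; ring
      · simp [h]
    rw [Finset.sum_congr rfl this, Finset.sum_ite_eq' S i]
  rw [h1]
  have hi : i ∉ (Finset.univ : Finset (Fin m)).erase i := Finset.notMem_erase i _
  have huniv : (Finset.univ : Finset (Fin m)) = insert i ((Finset.univ).erase i) :=
    (Finset.insert_erase (Finset.mem_univ i)).symm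
  nth_rewrite 1 [huniv]
  rw [Finset.sum_powerset_insert hi, Finset.mul_sum]
  have h0 : ∀ T ∈ ((Finset.univ : Finset (Fin m)).erase i).powerset,
      (if i ∈ T then (1 / ((T.card : ℝ) + 1)) * (Real.exp (y i) *
        ∏ k ∈ T.erase i, (Real.exp (y k) - 1)) else 0) = 0 := by
    intro T hT
    rw [if_neg fun h => hi (Finset.mem_powerset.mp hT h)]
  rw [Finset.sum_congr rfl h0, Finset.sum_const_zero, zero_add]
  refine Finset.sum_congr rfl fun T hT => ?_
  have hiT : i ∉ T := fun h => hi (Finset.mem_powerset.mp hT h)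
  rw [if_pos (Finset.mem_insert_self i T), Finset.erase_insert hiT,
    Finset.card_insert_of_notMem hiT]
  push_cast
  ring

lemma split_sum (g : Fin m → ℝ) (s : Finset (Fin m)) (j : Fin m) (hj : j ∈ s) :
    ∑ T ∈ s.powerset, (1 / ((T.card : ℝ) + 2)) * ∏ k ∈ T, g k
      = ∑ T ∈ (s.erase j).powerset, ((1 / ((T.card : ℝ) + 2)) * ∏ k ∈ T, g k
          + (1 / ((T.card : ℝ) + 3)) * (g j * ∏ k ∈ T, g k)) := by
  nth_rewrite 1 [← Finset.insert_erase hj]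
  rw [Finset.sum_powerset_insert (Finset.notMem_erase j s), ← Finset.sum_add_distrib]
  refine Finset.sum_congr rfl fun T hT => ?_
  have hjT : j ∉ T := fun h => Finset.notMem_erase j s (Finset.mem_powerset.mp hT h)
  rw [Finset.card_insert_of_notMem hjT, Finset.prod_insert hjT]
  push_cast
  ring

end SchurAux

theorem stmt4 (n : ℕ) (hn : 2 ≤ n)
    (φ : (Fin (n - 1) → ℝ) → ℝ)
    (hφ : φ = fun y => ∑ S ∈ (Finset.univ : Finset (Fin (n - 1))).powerset,
      (1 / (S.card + 1) : ℝ) * ∏ j ∈ S, (Real.exp (y j) - 1)) :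
    ∀ y : Fin (n - 1) → ℝ, (∀ j, 0 < y j) → ∀ i₁ i₂ : Fin (n - 1),
      0 ≤ (y i₁ - y i₂) *
        (fderiv ℝ φ y (Pi.single i₁ 1) - fderiv ℝ φ y (Pi.single i₂ 1)) := by
  intro y hy i₁ i₂
  have hder : fderiv ℝ φ y = Lmap y := by
    rw [hφ]; exact (hasFDeriv_phi y).fderiv
  rw [hder]
  by_cases hii : i₁ = i₂
  · subst hii; simp
  have h2 : i₂ ∈ (Finset.univ : Finset (Fin (n - 1))).erase i₁ :=
    Finset.mem_erase.mpr ⟨fun h => hii h.symm, Finset.mem_univ _⟩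
  have h1 : i₁ ∈ (Finset.univ : Finset (Fin (n - 1))).erase i₂ :=
    Finset.mem_erase.mpr ⟨hii, Finset.mem_univ _⟩
  rw [Lmap_single, Lmap_single,
    split_sum (fun k => Real.exp (y k) - 1) _ i₂ h2,
    split_sum (fun k => Real.exp (y k) - 1) _ i₁ h1,
    Finset.erase_right_comm (a := i₁) (b := i₂), Finset.mul_sum, Finset.mul_sum,
    ← Finset.sum_sub_distrib]
  set V := (((Finset.univ : Finset (Fin (n - 1))).erase i₂).erase i₁) with hV
  have hkey : ∀ T ∈ V.powerset,
      Real.exp (y i₁) * ((1 / ((T.card : ℝ) + 2)) * ∏ k ∈ T, (Real.exp (y k) - 1)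
          + (1 / ((T.card : ℝ) + 3)) * ((Real.exp (y i₂) - 1) * ∏ k ∈ T, (Real.exp (y k) - 1)))
        - Real.exp (y i₂) * ((1 / ((T.card : ℝ) + 2)) * ∏ k ∈ T, (Real.exp (y k) - 1)
          + (1 / ((T.card : ℝ) + 3)) * ((Real.exp (y i₁) - 1) * ∏ k ∈ T, (Real.exp (y k) - 1)))
      = (Real.exp (y i₁) - Real.exp (y i₂)) *
          ((1 / ((T.card : ℝ) + 2) - 1 / ((T.card : ℝ) + 3)) *
            ∏ k ∈ T, (Real.exp (y k) - 1)) := by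
    intro T _
    ring
  rw [Finset.sum_congr rfl hkey, ← Finset.mul_sum, ← mul_assoc]
  apply mul_nonneg
  · rcases le_total (y i₂) (y i₁) with h | h
    · exact mul_nonneg (by linarith) (by simp [Real.exp_le_exp, h])
    · have := Real.exp_le_exp.mpr h
      have := mul_nonneg (a := y i₂ - y i₁) (b := Real.exp (y i₂) - Real.exp (y i₁))
        (by linarith) (by linarith)
      nlinarith
  · refine Finset.sum_nonneg fun T _ => mul_nonneg ?_ (Finset.prod_nonneg fun k _ => ?_)
    · have h2 : (0:ℝ) < (T.card : ℝ) + 2 := by positivity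
      have h3 : (0:ℝ) < (T.card : ℝ) + 3 := by positivity
      rw [sub_nonneg, div_le_div_iff₀ h3 h2]
      linarith
    · nlinarith [hy k, Real.add_one_le_exp (y k)]
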